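/- For all n ≥ 1 and k ≥ 2, there exists an n-separating family F of subsets of [k] with |F| ≤ 2n·log₂ k / (−log₂(1 − 2^{−n})) + 1. -/

import Mathlib

open Finset

/-- `A` separates `B` if both `A ∩ B` and `Aᶜ ∩ B` are nonempty. -/
def Separates {X : Type*} [Fintype X] [DecidableEq X] (A B : Finset X) : Prop :=
  (A ∩ B).Nonempty ∧ (Aᶜ ∩ B).Nonempty

/-- `F` is `n`-separating if every separable collection `B₁, …, Bₙ` is simultaneously
separated by some member of `F`. -/
def NSeparating {X : Type*} [Fintype X] [DecidableEq X] (n : ℕ) (F : Finset (Finset X)) : Prop :=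
  ∀ B : Fin n → Finset X, (∃ A : Finset X, ∀ i, Separates A (B i)) →
    ∃ A ∈ F, ∀ i, Separates A (B i)

lemma zmod2_aux (u v a b : ZMod 2) (h : a ≠ b) : (u ≠ v ↔ (u + a) - (v + b) = 0) := by
  revert u v a b; decide

lemma zmod2_aux2 (u v a b : ZMod 2) (h : a ≠ b) (h2 : u - v = 0) : u + a ≠ v + b := by
  revert u v a b; decide

lemma zmod2_cases (u : ZMod 2) : u = 0 ∨ u = 1 := by revert u; decide

lemma count_ge (k n : ℕ) (x y : Fin n → Fin k)
    (c₀ : Fin k → ZMod 2) (h₀ : ∀ i, c₀ (x i) ≠ c₀ (y i)) :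
    2 ^ k ≤ 2 ^ n *
      (univ.filter (fun c : Fin k → ZMod 2 => ∀ i, c (x i) ≠ c (y i))).card := by
  classical
  set L : (Fin k → ZMod 2) →ₗ[ZMod 2] (Fin n → ZMod 2) :=
    LinearMap.pi (fun i => (LinearMap.proj (x i) : (Fin k → ZMod 2) →ₗ[ZMod 2] ZMod 2)
      - LinearMap.proj (y i)) with hL
  have hLapp : ∀ (c : Fin k → ZMod 2) (i : Fin n), L c i = c (x i) - c (y i) := by
    intro c i; simp [hL]
  have hcard : (univ.filter (fun c : Fin k → ZMod 2 => ∀ i, c (x i) ≠ c (y i))).card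
      = (univ.filter (fun c : Fin k → ZMod 2 => c ∈ LinearMap.ker L)).card := by
    apply Finset.card_nbij' (fun c => c + c₀) (fun c => c + c₀)
    · intro c hc
      simp only [mem_coe, mem_filter, mem_univ, true_and] at hc ⊢
      rw [LinearMap.mem_ker]
      funext i
      rw [hLapp]
      exact ((zmod2_aux _ _ _ _ (h₀ i)).1 (hc i))
    · intro c hc
      simp only [mem_coe, mem_filter, mem_univ, true_and] at hc ⊢
      rw [LinearMap.mem_ker] at hc
      intro i
      have := congrFun hc i
      rw [hLapp] at this
      simp only [Pi.zero_apply] at this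
      simp only [Pi.add_apply]
      exact zmod2_aux2 _ _ _ _ (h₀ i) this
    · intro c _; funext v; simp [add_assoc, CharTwo.add_self_eq_zero]
    · intro c _; funext v; simp [add_assoc, CharTwo.add_self_eq_zero]
  rw [hcard]
  have hker : (univ.filter (fun c : Fin k → ZMod 2 => c ∈ LinearMap.ker L)).card
      = Fintype.card (LinearMap.ker L) := (Fintype.card_subtype _).symm
  rw [hker]
  have h1 : Module.finrank (ZMod 2) (LinearMap.range L)
      + Module.finrank (ZMod 2) (LinearMap.ker L) = k := by
    rw [LinearMap.finrank_range_add_finrank_ker L]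
    simp [Module.finrank_pi]
  have h2 : Module.finrank (ZMod 2) (LinearMap.range L) ≤ n := by
    have := Submodule.finrank_le (LinearMap.range L)
    simpa [Module.finrank_pi] using this
  have h3 : Fintype.card (LinearMap.ker L) = 2 ^ Module.finrank (ZMod 2) (LinearMap.ker L) := by
    rw [Module.card_eq_pow_finrank (K := ZMod 2)]
    norm_num
  rw [h3, ← pow_add]
  calc 2 ^ k = 2 ^ (Module.finrank (ZMod 2) (LinearMap.range L)
      + Module.finrank (ZMod 2) (LinearMap.ker L)) := by rw [h1]
    _ ≤ _ := Nat.pow_le_pow_right (by norm_num) (Nat.add_le_add_right h2 _)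

theorem stmt_9 (n k : ℕ) (hn : 1 ≤ n) (hk : 2 ≤ k) :
    ∃ F : Finset (Finset (Fin k)), NSeparating n F ∧
      (F.card : ℝ) ≤
        2 * n * Real.logb 2 k / (-Real.logb 2 (1 - 1 / 2 ^ n)) + 1 := by
  classical
  set a : ℝ := 1 - 1 / 2 ^ n with ha
  have h2n1 : (2:ℝ) ≤ 2 ^ n := by
    calc (2:ℝ) = 2^1 := (pow_one 2).symm
      _ ≤ 2^n := by apply pow_le_pow_right₀ (by norm_num) hn
  have ha0 : 0 < a := by
    have : (1:ℝ) / 2 ^ n ≤ 1 / 2 := by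
      apply div_le_div_of_nonneg_left (by norm_num) (by norm_num) h2n1
    rw [ha]; linarith
  have ha1 : a < 1 := by
    have : (0:ℝ) < 1 / 2 ^ n := by positivity
    rw [ha]; linarith
  have hla : Real.logb 2 a < 0 := Real.logb_neg one_lt_two ha0 ha1
  set R : ℝ := 2 * n * Real.logb 2 k / (-Real.logb 2 a) with hR
  have hk1 : (1:ℝ) ≤ (k:ℝ) := by exact_mod_cast (by omega : 1 ≤ k)
  have hR0 : 0 ≤ R := by
    apply div_nonneg
    · have := Real.logb_nonneg one_lt_two hk1
      positivity
    · linarith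
  set m : ℕ := ⌊R⌋₊ + 1 with hm
  have hmR : R < (m:ℝ) := by
    rw [hm]; push_cast; exact Nat.lt_floor_add_one R
  -- key analytic inequality
  have key : (k:ℝ) ^ (2*n) * a ^ m < 1 := by
    have h1 : (2*n : ℝ) * Real.logb 2 k < (m:ℝ) * (-Real.logb 2 a) := by
      rw [hR] at hmR
      have := (div_lt_iff₀ (by linarith : (0:ℝ) < -Real.logb 2 a)).1 hmR
      linarith
    by_contra hcon
    push_neg at hcon
    have h0 := Real.logb_nonneg one_lt_two hcon
    rw [Real.logb_mul (by positivity) (by positivity), Real.logb_pow, Real.logb_pow] at h0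
    push_cast at h0
    have hmc : (m:ℝ) = (⌊R⌋₊:ℝ) + 1 := by rw [hm]; push_cast; ring
    nlinarith [hmc]
  -- combinatorial setup
  set good : (Fin k → ZMod 2) → ((Fin n → Fin k) × (Fin n → Fin k)) → Prop :=
    fun c p => ∀ i, c (p.1 i) ≠ c (p.2 i) with hgood
  set T : Finset ((Fin n → Fin k) × (Fin n → Fin k)) :=
    univ.filter (fun p => ∃ c, good c p) with hT
  have hTcard : (T.card : ℝ) ≤ (k:ℝ) ^ (2*n) := by
    have h1 : T.card ≤ k ^ n * k ^ n := by
      calc T.card ≤ (univ : Finset ((Fin n → Fin k) × (Fin n → Fin k))).card :=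
            card_filter_le _ _
        _ = k ^ n * k ^ n := by
            simp [card_univ, Fintype.card_prod, Fintype.card_fun]
    calc (T.card:ℝ) ≤ ((k ^ n * k ^ n : ℕ):ℝ) := by exact_mod_cast h1
      _ = (k:ℝ) ^ (2*n) := by push_cast; ring
  have hbad : ∀ p ∈ T, ((univ.filter (fun c => ¬ good c p)).card : ℝ) ≤ 2 ^ k * a := by
    intro p hp
    rw [hT, mem_filter] at hp
    obtain ⟨-, c₀, hc₀⟩ := hp
    have hcount := count_ge k n p.1 p.2 c₀ hc₀
    have hsplit : (univ.filter (fun c => good c p)).card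
        + (univ.filter (fun c => ¬ good c p)).card = 2 ^ k := by
      rw [Finset.card_filter_add_card_filter_not]
      simp [card_univ, Fintype.card_fun]
    have h2npos : (0:ℝ) < 2 ^ n := by positivity
    have hgR : (2:ℝ) ^ k ≤ 2 ^ n * ((univ.filter (fun c => good c p)).card : ℝ) := by
      exact_mod_cast hcount
    have hsR : ((univ.filter (fun c => good c p)).card : ℝ)
        + ((univ.filter (fun c => ¬ good c p)).card : ℝ) = 2 ^ k := by
      exact_mod_cast hsplit
    have hdiv : (2:ℝ) ^ k / 2 ^ n ≤ ((univ.filter (fun c => good c p)).card : ℝ) := by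
      rw [div_le_iff₀ h2npos]; linarith
    have haa : (2:ℝ) ^ k * a = 2 ^ k - 2 ^ k / 2 ^ n := by
      rw [ha]; field_simp
    rw [haa]
    linarith
  -- existence of a good family
  obtain ⟨g, hg⟩ : ∃ g : Fin m → (Fin k → ZMod 2), ∀ p ∈ T, ∃ j, good (g j) p := by
    by_contra hcon
    push_neg at hcon
    have hsub : (univ : Finset (Fin m → (Fin k → ZMod 2))) ⊆
        T.biUnion (fun p => univ.filter (fun g => ∀ j, ¬ good (g j) p)) := by
      intro g0 _
      obtain ⟨p, hpT, hpg⟩ := hcon g0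
      exact mem_biUnion.2 ⟨p, hpT, mem_filter.2 ⟨mem_univ _, hpg⟩⟩
    have hcard := (card_le_card hsub).trans (card_biUnion_le)
    have huniv : (univ : Finset (Fin m → (Fin k → ZMod 2))).card = (2 ^ k) ^ m := by
      simp [card_univ, Fintype.card_fun]
    have hterm : ∀ p : (Fin n → Fin k) × (Fin n → Fin k),
        (univ.filter (fun g0 : Fin m → Fin k → ZMod 2 => ∀ j, ¬ good (g0 j) p)).card
        = (univ.filter (fun c => ¬ good c p)).card ^ m := by
      intro p
      have hset : (univ.filter (fun g0 : Fin m → Fin k → ZMod 2 => ∀ j, ¬ good (g0 j) p)) =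
          Fintype.piFinset (fun _ : Fin m => univ.filter (fun c => ¬ good c p)) := by
        ext g0
        simp [Fintype.mem_piFinset]
      rw [hset, Fintype.card_piFinset]
      simp
    rw [huniv] at hcard
    have hrealsum : (((2:ℕ) ^ k) ^ m : ℝ) ≤ (T.card : ℝ) * ((2:ℝ) ^ k * a) ^ m := by
      have hsum : ((2 ^ k) ^ m : ℕ) ≤ ∑ p ∈ T, (univ.filter
          (fun c : Fin k → ZMod 2 => ¬ good c p)).card ^ m := by
        refine hcard.trans (le_of_eq ?_)
        exact Finset.sum_congr rfl (fun p _ => hterm p)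
      have hstep : ((∑ p ∈ T, (univ.filter (fun c : Fin k → ZMod 2 => ¬ good c p)).card ^ m : ℕ) : ℝ)
          ≤ (T.card : ℝ) * ((2:ℝ) ^ k * a) ^ m := by
        push_cast
        calc ∑ p ∈ T, ((univ.filter (fun c : Fin k → ZMod 2 => ¬ good c p)).card : ℝ) ^ m
            ≤ ∑ _p ∈ T, ((2:ℝ) ^ k * a) ^ m := by
              apply Finset.sum_le_sum
              intro p hp
              exact pow_le_pow_left₀ (by positivity) (hbad p hp) m
          _ = (T.card : ℝ) * ((2:ℝ) ^ k * a) ^ m := by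
              rw [Finset.sum_const, nsmul_eq_mul]
      calc (((2:ℕ) ^ k) ^ m : ℝ)
          = ((((2:ℕ) ^ k) ^ m : ℕ) : ℝ) := by push_cast; ring
        _ ≤ ((∑ p ∈ T, (univ.filter (fun c : Fin k → ZMod 2 => ¬ good c p)).card ^ m : ℕ) : ℝ) := by
            exact_mod_cast hsum
        _ ≤ _ := hstep
    have hlt : (T.card : ℝ) * ((2:ℝ) ^ k * a) ^ m < (((2:ℕ) ^ k) ^ m : ℝ) := by
      have hfin : (k:ℝ) ^ (2*n) * ((2:ℝ) ^ k * a) ^ m < ((2:ℝ) ^ k) ^ m := by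
        rw [mul_pow]
        calc (k:ℝ) ^ (2*n) * (((2:ℝ) ^ k) ^ m * a ^ m)
            = ((k:ℝ) ^ (2*n) * a ^ m) * ((2:ℝ) ^ k) ^ m := by ring
          _ < 1 * ((2:ℝ) ^ k) ^ m := by
              apply mul_lt_mul_of_pos_right key (by positivity)
          _ = ((2:ℝ) ^ k) ^ m := one_mul _
      have hTc : (T.card : ℝ) * ((2:ℝ) ^ k * a) ^ m ≤ (k:ℝ) ^ (2*n) * ((2:ℝ) ^ k * a) ^ m := by
        apply mul_le_mul_of_nonneg_right hTcard (by positivity)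
      push_cast
      exact lt_of_le_of_lt hTc hfin
    linarith
  -- build the family
  refine ⟨(univ : Finset (Fin m)).image (fun j => univ.filter (fun v => g j v = 1)), ?_, ?_⟩
  · intro B hB
    obtain ⟨A₀, hA₀⟩ := hB
    choose x hx using fun i => (hA₀ i).1
    choose y hy using fun i => (hA₀ i).2
    set c₀ : Fin k → ZMod 2 := fun v => if v ∈ A₀ then 1 else 0 with hc₀
    have hp : (⟨x, y⟩ : (Fin n → Fin k) × (Fin n → Fin k)) ∈ T := by
      rw [hT, mem_filter]
      refine ⟨mem_univ _, c₀, ?_⟩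
      intro i
      have hxi : x i ∈ A₀ := (mem_inter.1 (hx i)).1
      have hyi : y i ∉ A₀ := by
        have := (mem_inter.1 (hy i)).1
        simpa using this
      simp [hc₀, hxi, hyi]
    obtain ⟨j, hj⟩ := hg _ hp
    refine ⟨univ.filter (fun v => g j v = 1), mem_image.2 ⟨j, mem_univ _, rfl⟩, ?_⟩
    intro i
    have hji : g j (x i) ≠ g j (y i) := hj i
    have hxB : x i ∈ B i := (mem_inter.1 (hx i)).2
    have hyB : y i ∈ B i := (mem_inter.1 (hy i)).2
    by_cases hc : g j (x i) = 1
    · have hcy : g j (y i) ≠ 1 := fun h => hji (hc.trans h.symm)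
      constructor
      · exact ⟨x i, mem_inter.2 ⟨mem_filter.2 ⟨mem_univ _, hc⟩, hxB⟩⟩
      · refine ⟨y i, mem_inter.2 ⟨?_, hyB⟩⟩
        rw [Finset.mem_compl]
        simp [hcy]
    · have hx0 : g j (x i) = 0 := (zmod2_cases _).resolve_right hc
      have hy1 : g j (y i) = 1 := by
        rcases zmod2_cases (g j (y i)) with h | h
        · exact absurd (hx0.trans h.symm) hji
        · exact h
      constructor
      · exact ⟨y i, mem_inter.2 ⟨mem_filter.2 ⟨mem_univ _, hy1⟩, hyB⟩⟩
      · refine ⟨x i, mem_inter.2 ⟨?_, hxB⟩⟩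
        rw [Finset.mem_compl]
        simp [hc]
  · have hcm : ((univ : Finset (Fin m)).image
        (fun j => univ.filter (fun v => g j v = 1))).card ≤ m := by
      refine (card_image_le).trans ?_
      simp
    calc (((univ : Finset (Fin m)).image
          (fun j => univ.filter (fun v => g j v = 1))).card : ℝ)
        ≤ (m:ℝ) := by exact_mod_cast hcm
      _ = (⌊R⌋₊ : ℝ) + 1 := by rw [hm]; push_cast; ring
      _ ≤ R + 1 := by linarith [Nat.floor_le hR0]
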